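/- Let G = (L, R, E) be a bipartite graph with nonnegative, pairwise-distinct edge weights and let p ∈ [0,1]. Let L' ⊆ L be a random subset containing each vertex of L independently with probability p. Then the expected weight of the greedy matching on the subgraph induced by L' ∪ R is at least (p/(1+p)) times the weight of a maximum-weight matching of G. -/

import Mathlib

open Finset

open scoped Classical

/-- Greedy matching with fuel: repeatedly pick the maximum-weight remaining edge and
discard all edges conflicting with it. -/
noncomputable def greedyAux {α : Type*} [DecidableEq α] (w : α → ℝ)
    (conflict : α → α → Prop) : ℕ → Finset α → Finset α
  | 0, _ => ∅
  | n + 1, F =>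
    if h : F.Nonempty then
      let e := (F.exists_max_image w h).choose
      insert e (greedyAux w conflict n (F.filter fun f => ¬ conflict e f))
    else ∅

/-- The greedy matching of an edge set `F`: process edges in decreasing order of weight,
adding an edge whenever it conflicts with no previously added edge. -/
noncomputable def greedy {α : Type*} [DecidableEq α] (w : α → ℝ)
    (conflict : α → α → Prop) (F : Finset α) : Finset α :=
  greedyAux w conflict F.card F

/-- Two edges of a bipartite graph conflict iff they share an endpoint. -/
def bconf {L R : Type*} (e f : L × R) : Prop := e.1 = f.1 ∨ e.2 = f.2

/-- The edge set of the subgraph `G[U ∪ R]` induced by a set `U` of left vertices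
(together with the whole right side). -/
def subL {L R : Type*} [DecidableEq L] (E : Finset (L × R)) (U : Finset L) :
    Finset (L × R) :=
  E.filter fun e => e.1 ∈ U

/-- Expectation of `f` over a random subset of `s` containing each element
independently with probability `p`. -/
noncomputable def expSubsets {ι : Type*} (p : ℝ) (s : Finset ι) (f : Finset ι → ℝ) : ℝ :=
  ∑ A ∈ s.powerset, p ^ A.card * (1 - p) ^ (s.card - A.card) * f A

/-- A set of edges is a matching if no two distinct edges conflict. -/
def isMatching {α : Type*} (conflict : α → α → Prop) (M : Finset α) : Prop :=
  ∀ e ∈ M, ∀ f ∈ M, e ≠ f → ¬ conflict e f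

/-- `OPT`: the maximum total weight of a matching contained in the edge set `E`. -/
noncomputable def optWeight {α : Type*} (w : α → ℝ) (conflict : α → α → Prop)
    (E : Finset α) : ℝ :=
  (E.powerset.filter fun M => isMatching conflict M).sup'
    ⟨∅, Finset.mem_filter.mpr ⟨Finset.empty_mem_powerset _,
        fun e he => absurd he (Finset.notMem_empty e)⟩⟩
    (fun M => ∑ e ∈ M, w e)

/-- One step of the greedy-based online algorithm with sample `L'`: the arriving
vertex `u` gets as candidate the edge incident to `u` in `Greedy(G[L' ∪ {u}])`, and
the candidate edge is added if its right endpoint is not yet matched. -/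
noncomputable def stepB {L R : Type*} [DecidableEq L] [DecidableEq R]
    (E : Finset (L × R)) (w : L × R → ℝ) (L' : Finset L)
    (M : Finset (L × R)) (u : L) : Finset (L × R) :=
  M ∪ (greedy w bconf (subL E (insert u L'))).filter
      (fun e => e.1 = u ∧ ∀ f ∈ M, f.2 ≠ e.2)

/-- The output matching of the greedy-based online algorithm with sample `L'`,
when the online vertices arrive in the order given by `order`. -/
noncomputable def runB {L R : Type*} [DecidableEq L] [DecidableEq R]
    (E : Finset (L × R)) (w : L × R → ℝ) (L' : Finset L) (order : List L) :
    Finset (L × R) :=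
  order.foldl (stepB E w L') ∅

set_option linter.unusedSectionVars false

section GreedyLemmas
variable {α : Type*} [DecidableEq α] (w : α → ℝ) (conflict : α → α → Prop)

lemma greedyAux_empty (n : ℕ) : greedyAux w conflict n (∅ : Finset α) = ∅ := by
  cases n <;> simp [greedyAux]

lemma greedyAux_subset : ∀ (n : ℕ) (F : Finset α), greedyAux w conflict n F ⊆ F := by
  intro n
  induction n with
  | zero => intro F; simp [greedyAux]
  | succ n ih =>
    intro F
    by_cases h : F.Nonempty
    · simp only [greedyAux, dif_pos h]
      intro x hx
      rcases Finset.mem_insert.mp hx with rfl | hx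
      · exact ((F.exists_max_image w h).choose_spec).1
      · exact Finset.filter_subset _ _ (ih _ hx)
    · simp [greedyAux, dif_neg h]

lemma greedy_subset (F : Finset α) : greedy w conflict F ⊆ F :=
  greedyAux_subset w conflict _ F

lemma greedyAux_succ_def (n : ℕ) (F : Finset α) :
    greedyAux w conflict (n + 1) F =
      if h : F.Nonempty then
        insert (F.exists_max_image w h).choose
          (greedyAux w conflict n
            (F.filter fun f => ¬ conflict (F.exists_max_image w h).choose f))
      else ∅ := rfl

lemma greedyAux_succ (hrefl : ∀ a, conflict a a) :
    ∀ (n : ℕ) (F : Finset α), F.card ≤ n →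
      greedyAux w conflict (n + 1) F = greedyAux w conflict n F := by
  intro n
  induction n with
  | zero =>
    intro F hF
    have : F = ∅ := Finset.card_eq_zero.mp (Nat.le_zero.mp hF)
    subst this
    rw [greedyAux_empty, greedyAux_empty]
  | succ n ih =>
    intro F hF
    by_cases h : F.Nonempty
    · rw [greedyAux_succ_def, greedyAux_succ_def, dif_pos h, dif_pos h]
      set e := (F.exists_max_image w h).choose with he
      have heF : e ∈ F := ((F.exists_max_image w h).choose_spec).1
      have hsub : (F.filter fun f => ¬ conflict e f) ⊆ F.erase e := by
        apply Finset.subset_erase.mpr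
        refine ⟨Finset.filter_subset _ _, ?_⟩
        simp [hrefl e]
      have hcard : (F.filter fun f => ¬ conflict e f).card ≤ n := by
        have := Finset.card_le_card hsub
        have h2 := Finset.card_erase_of_mem heF
        omega
      rw [ih _ hcard]
    · simp [greedyAux, dif_neg h]

lemma greedyAux_eq_greedy (hrefl : ∀ a, conflict a a) (n : ℕ) (F : Finset α)
    (hn : F.card ≤ n) : greedyAux w conflict n F = greedy w conflict F := by
  induction n, hn using Nat.le_induction with
  | base => rfl
  | succ n hn ih => rw [greedyAux_succ w conflict hrefl n F hn, ih]

lemma greedy_step (hrefl : ∀ a, conflict a a) (F : Finset α) (h : F.Nonempty)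
    (e : α) (heF : e ∈ F) (hmax : ∀ f ∈ F, f ≠ e → w f < w e) :
    greedy w conflict F = insert e (greedy w conflict (F.filter fun f => ¬ conflict e f)) := by
  obtain ⟨m, hm⟩ : ∃ m, F.card = m + 1 :=
    ⟨F.card - 1, (Nat.succ_pred_eq_of_pos (Finset.card_pos.mpr h)).symm⟩
  unfold greedy
  rw [hm, greedyAux_succ_def, dif_pos h]
  obtain ⟨hcF, hcmax⟩ := (F.exists_max_image w h).choose_spec
  have hce : (F.exists_max_image w h).choose = e := by
    by_contra hne
    exact absurd (hcmax e heF) (not_le.mpr (hmax _ hcF hne))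
  rw [hce]
  congr 1
  have hsub : (F.filter fun f => ¬ conflict e f) ⊆ F.erase e := by
    apply Finset.subset_erase.mpr
    exact ⟨Finset.filter_subset _ _, by simp [hrefl e]⟩
  have hcard : (F.filter fun f => ¬ conflict e f).card ≤ m := by
    have := Finset.card_le_card hsub
    have h2 := Finset.card_erase_of_mem heF
    omega
  exact greedyAux_eq_greedy w conflict hrefl m _ hcard

end GreedyLemmas

section ExpLemmas
variable {ι : Type*} [DecidableEq ι] (p : ℝ)

lemma expSubsets_congr (s : Finset ι) {f g : Finset ι → ℝ}
    (h : ∀ A ∈ s.powerset, f A = g A) : expSubsets p s f = expSubsets p s g := by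
  unfold expSubsets
  exact Finset.sum_congr rfl fun A hA => by rw [h A hA]

lemma expSubsets_insert {i : ι} {t : Finset ι} (hi : i ∉ t) (f : Finset ι → ℝ) :
    expSubsets p (insert i t) f =
      p * expSubsets p t (fun B => f (insert i B)) +
        (1 - p) * expSubsets p t f := by
  unfold expSubsets
  rw [Finset.powerset_insert, Finset.sum_union, Finset.sum_image, Finset.mul_sum,
    Finset.mul_sum]
  · rw [add_comm]
    congr 1
    · apply Finset.sum_congr rfl
      intro A hA
      have hAt : A ⊆ t := Finset.mem_powerset.mp hA
      have hiA : i ∉ A := fun hh => hi (hAt hh)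
      have h1 : (insert i t).card = t.card + 1 := Finset.card_insert_of_notMem hi
      have h2 : (insert i A).card = A.card + 1 := Finset.card_insert_of_notMem hiA
      have h4 : A.card ≤ t.card := Finset.card_le_card hAt
      have h3 : t.card + 1 - (insert i A).card = t.card - A.card := by omega
      rw [h1, h3, h2, pow_succ]
      ring
    · apply Finset.sum_congr rfl
      intro A hA
      have hAt : A ⊆ t := Finset.mem_powerset.mp hA
      have h1 : (insert i t).card = t.card + 1 := Finset.card_insert_of_notMem hi
      have h2 : A.card ≤ t.card := Finset.card_le_card hAt
      have h3 : t.card + 1 - A.card = (t.card - A.card) + 1 := by omega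
      rw [h1, h3, pow_succ]
      ring
  · intro A hA B hB hAB
    have hiA : i ∉ A := fun hh => hi (Finset.mem_powerset.mp hA hh)
    have hiB : i ∉ B := fun hh => hi (Finset.mem_powerset.mp hB hh)
    rw [← Finset.erase_insert hiA, ← Finset.erase_insert hiB, hAB]
  · rw [Finset.disjoint_left]
    intro A hA hA2
    obtain ⟨B, hB, rfl⟩ := Finset.mem_image.mp hA2
    exact hi (Finset.mem_powerset.mp hA (Finset.mem_insert_self i B))

lemma expSubsets_const (s : Finset ι) (c : ℝ) :
    expSubsets p s (fun _ => c) = c := by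
  induction s using Finset.induction_on with
  | empty => simp [expSubsets]
  | insert _ _ hi ih =>
    rw [expSubsets_insert p hi, ih]
    ring

lemma expSubsets_add_const (s : Finset ι) (c : ℝ) (f : Finset ι → ℝ) :
    expSubsets p s (fun A => c + f A) = c + expSubsets p s f := by
  have step : expSubsets p s (fun A => c + f A) =
      expSubsets p s (fun _ => c) + expSubsets p s f := by
    unfold expSubsets
    rw [← Finset.sum_add_distrib]
    exact Finset.sum_congr rfl fun A _ => by ring
  rw [step, expSubsets_const]

lemma expSubsets_of_invariant {i : ι} {t : Finset ι} (hi : i ∉ t) (f : Finset ι → ℝ)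
    (hf : ∀ B, f (insert i B) = f B) :
    expSubsets p (insert i t) f = expSubsets p t f := by
  rw [expSubsets_insert p hi]
  have : (fun B => f (insert i B)) = f := funext hf
  rw [this]
  ring

end ExpLemmas

section OptLemmas
variable {α : Type*} [DecidableEq α] (w : α → ℝ) (conflict : α → α → Prop)

lemma empty_mem_matchings (E : Finset α) :
    ∅ ∈ E.powerset.filter fun M => isMatching conflict M :=
  Finset.mem_filter.mpr ⟨Finset.empty_mem_powerset _,
    fun e he => absurd he (Finset.notMem_empty e)⟩

lemma optWeight_nonneg (E : Finset α) : 0 ≤ optWeight w conflict E := by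
  have h := Finset.le_sup' (fun M => ∑ e ∈ M, w e) (empty_mem_matchings conflict E)
  simpa [optWeight] using h

lemma optWeight_le_matching {E : Finset α} {M : Finset α} (hME : M ⊆ E)
    (hM : isMatching conflict M) : ∑ e ∈ M, w e ≤ optWeight w conflict E := by
  exact Finset.le_sup' (fun M => ∑ e ∈ M, w e)
    (Finset.mem_filter.mpr ⟨Finset.mem_powerset.mpr hME, hM⟩)

lemma optWeight_remove (E E' : Finset α) (q : α → Prop) (B : ℝ) (hB : 0 ≤ B)
    (hE' : ∀ f, f ∈ E' ↔ f ∈ E ∧ q f)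
    (hw : ∀ f ∈ E, ¬ q f → w f ≤ B)
    (hc : ∀ f ∈ E, ∀ g ∈ E, ¬ q f → ¬ q g → f ≠ g → conflict f g) :
    optWeight w conflict E ≤ B + optWeight w conflict E' := by
  apply Finset.sup'_le
  intro M hM
  obtain ⟨hME', hMm⟩ := Finset.mem_filter.mp hM
  have hME : M ⊆ E := Finset.mem_powerset.mp hME'
  have hsplit : ∑ e ∈ M, w e =
      ∑ e ∈ M.filter q, w e + ∑ e ∈ M.filter (fun f => ¬ q f), w e :=
    (Finset.sum_filter_add_sum_filter_not M q w).symm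
  have h1 : ∑ e ∈ M.filter q, w e ≤ optWeight w conflict E' := by
    apply optWeight_le_matching
    · intro f hf
      obtain ⟨hfM, hfq⟩ := Finset.mem_filter.mp hf
      exact (hE' f).mpr ⟨hME hfM, hfq⟩
    · intro e he f hf hne
      exact hMm e (Finset.mem_of_mem_filter _ he) f (Finset.mem_of_mem_filter _ hf) hne
  have h2 : ∑ e ∈ M.filter (fun f => ¬ q f), w e ≤ B := by
    have hcard : (M.filter (fun f => ¬ q f)).card ≤ 1 := by
      rw [Finset.card_le_one]
      intro a ha b hb
      obtain ⟨haM, haq⟩ := Finset.mem_filter.mp ha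
      obtain ⟨hbM, hbq⟩ := Finset.mem_filter.mp hb
      by_contra hab
      exact hMm a haM b hbM hab (hc a (hME haM) b (hME hbM) haq hbq hab)
    rcases Finset.eq_empty_or_nonempty (M.filter (fun f => ¬ q f)) with hS | hS
    · rw [hS]; simpa using hB
    · have : (M.filter (fun f => ¬ q f)).card = 1 :=
        le_antisymm hcard (Finset.card_pos.mpr hS)
      obtain ⟨a, ha⟩ := Finset.card_eq_one.mp this
      rw [ha, Finset.sum_singleton]
      have haM : a ∈ M.filter (fun f => ¬ q f) := ha ▸ Finset.mem_singleton_self a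
      obtain ⟨haM', haq⟩ := Finset.mem_filter.mp haM
      exact hw a (hME haM') haq
  linarith

end OptLemmas

lemma key {L R : Type*} [Fintype L] [DecidableEq L] [DecidableEq R]
    (p : ℝ) (hp0 : 0 ≤ p) (hp1 : p ≤ 1) (w : L × R → ℝ) :
    ∀ (n : ℕ) (E : Finset (L × R)), E.card ≤ n →
      (∀ e ∈ E, 0 ≤ w e) → Set.InjOn w ↑E →
      (p / (1 + p)) * optWeight w bconf E ≤
        expSubsets p Finset.univ (fun A => ∑ e ∈ greedy w bconf (subL E A), w e) := by
  intro n
  induction n with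
  | zero =>
    intro E hcard _ _
    have hE : E = ∅ := Finset.card_eq_zero.mp (Nat.le_zero.mp hcard)
    subst hE
    have hopt : optWeight w bconf (∅ : Finset (L × R)) = 0 := by
      refine le_antisymm ?_ (optWeight_nonneg w bconf ∅)
      apply Finset.sup'_le
      intro M hM
      have : M = ∅ := Finset.subset_empty.mp
        (Finset.mem_powerset.mp (Finset.mem_filter.mp hM).1)
      simp [this]
    have hexp : expSubsets p Finset.univ
        (fun A => ∑ e ∈ greedy w bconf (subL (∅ : Finset (L × R)) A), w e) = 0 := by
      unfold expSubsets
      apply Finset.sum_eq_zero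
      intro A _
      simp [subL, greedy, greedyAux_empty]
    rw [hopt, hexp]
    simp
  | succ n ih =>
    intro E hcard hw0 hwinj
    rcases E.eq_empty_or_nonempty with rfl | hne
    · exact ih ∅ (by simp) (by simp) (by intro a ha; simp at ha)
    obtain ⟨e, heE, hemax⟩ := E.exists_max_image w hne
    have hrefl : ∀ a : L × R, bconf a a := fun a => Or.inl rfl
    have hlt : ∀ f ∈ E, f ≠ e → w f < w e := fun f hf hne' =>
      lt_of_le_of_ne (hemax f hf) fun hh =>
        hne' (hwinj (Finset.mem_coe.mpr hf) (Finset.mem_coe.mpr heE) hh)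
    set E1 := E.filter (fun f => f.1 ≠ e.1) with hE1
    set E2 := E.filter (fun f => ¬ bconf e f) with hE2
    have heE1 : e ∉ E1 := by simp [hE1]
    have heE2 : e ∉ E2 := by simp [hE2, hrefl e]
    have hc1 : E1.card ≤ n := by
      have hsub : E1 ⊆ E.erase e := Finset.subset_erase.mpr ⟨Finset.filter_subset _ _, heE1⟩
      have := Finset.card_le_card hsub
      have h2 := Finset.card_erase_of_mem heE
      omega
    have hc2 : E2.card ≤ n := by
      have hsub : E2 ⊆ E.erase e := Finset.subset_erase.mpr ⟨Finset.filter_subset _ _, heE2⟩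
      have := Finset.card_le_card hsub
      have h2 := Finset.card_erase_of_mem heE
      omega
    have IH1 := ih E1 hc1 (fun f hf => hw0 f (Finset.filter_subset _ _ hf))
      (hwinj.mono (by exact_mod_cast Finset.filter_subset _ _))
    have IH2 := ih E2 hc2 (fun f hf => hw0 f (Finset.filter_subset _ _ hf))
      (hwinj.mono (by exact_mod_cast Finset.filter_subset _ _))
    -- OPT inequalities
    have hO1 : optWeight w bconf E ≤ w e + optWeight w bconf E1 := by
      apply optWeight_remove w bconf E E1 (fun f => f.1 ≠ e.1) (w e) (hw0 e heE)
      · intro f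
        rw [hE1, Finset.mem_filter]
      · exact fun f hf _ => hemax f hf
      · intro f hf g hg hqf hqg _
        exact Or.inl ((not_ne_iff.mp hqf).trans (not_ne_iff.mp hqg).symm)
    have hO2 : optWeight w bconf E1 ≤ w e + optWeight w bconf E2 := by
      apply optWeight_remove w bconf E1 E2 (fun f => f.2 ≠ e.2) (w e) (hw0 e heE)
      · intro f
        rw [hE1, hE2, Finset.mem_filter, Finset.mem_filter]
        simp only [bconf, not_or]
        constructor
        · rintro ⟨hf, h1, h2⟩
          exact ⟨⟨hf, fun hh => h1 hh.symm⟩, fun hh => h2 hh.symm⟩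
        · rintro ⟨⟨hf, h1⟩, h2⟩
          exact ⟨hf, fun hh => h1 hh.symm, fun hh => h2 hh.symm⟩
      · exact fun f hf _ => hemax f ((Finset.mem_filter.mp (hE1 ▸ hf)).1)
      · intro f hf g hg hqf hqg _
        exact Or.inr ((not_ne_iff.mp hqf).trans (not_ne_iff.mp hqg).symm)
    -- greedy decomposition
    have hgA : ∀ A : Finset L, e.1 ∈ A →
        (∑ f ∈ greedy w bconf (subL E A), w f) =
          w e + ∑ f ∈ greedy w bconf (subL E2 A), w f := by
      intro A hA
      have heF : e ∈ subL E A := Finset.mem_filter.mpr ⟨heE, hA⟩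
      have hFne : (subL E A).Nonempty := ⟨e, heF⟩
      have hmaxF : ∀ f ∈ subL E A, f ≠ e → w f < w e := fun f hf =>
        hlt f (Finset.mem_of_mem_filter _ hf)
      rw [greedy_step w bconf hrefl _ hFne e heF hmaxF]
      have hfilter : (subL E A).filter (fun f => ¬ bconf e f) = subL E2 A := by
        unfold subL
        rw [hE2]
        exact Finset.filter_comm _ _ _
      rw [hfilter, Finset.sum_insert]
      intro hmem
      exact heE2 (Finset.mem_of_mem_filter _ (greedy_subset w bconf (subL E2 A) hmem))
    have hAeq : ∀ A : Finset L, e.1 ∉ A → subL E A = subL E1 A := by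
      intro A hA
      ext f
      simp only [subL, hE1, Finset.mem_filter]
      constructor
      · rintro ⟨hf, hfa⟩
        exact ⟨⟨hf, fun hh => hA (hh ▸ hfa)⟩, hfa⟩
      · rintro ⟨⟨hf, _⟩, hfa⟩
        exact ⟨hf, hfa⟩
    have hinv2 : ∀ B : Finset L, subL E2 (insert e.1 B) = subL E2 B := by
      intro B
      unfold subL
      apply Finset.filter_congr
      intro f hf
      have hf1 : f.1 ≠ e.1 := by
        rw [hE2] at hf
        obtain ⟨_, hb⟩ := Finset.mem_filter.mp hf
        exact fun hh => hb (Or.inl hh.symm)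
      simp [Finset.mem_insert, hf1]
    have hinv1 : ∀ B : Finset L, subL E1 (insert e.1 B) = subL E1 B := by
      intro B
      unfold subL
      apply Finset.filter_congr
      intro f hf
      have hf1 : f.1 ≠ e.1 := by
        rw [hE1] at hf
        exact (Finset.mem_filter.mp hf).2
      simp [Finset.mem_insert, hf1]
    -- expectation decomposition
    have hni : e.1 ∉ (Finset.univ : Finset L).erase e.1 := Finset.notMem_erase _ _
    have huniv : insert e.1 ((Finset.univ : Finset L).erase e.1) = Finset.univ :=
      Finset.insert_erase (Finset.mem_univ _)
    set t := (Finset.univ : Finset L).erase e.1 with ht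
    have hmain : expSubsets p Finset.univ
          (fun A => ∑ f ∈ greedy w bconf (subL E A), w f) =
        p * (w e + expSubsets p Finset.univ
            (fun A => ∑ f ∈ greedy w bconf (subL E2 A), w f)) +
          (1 - p) * expSubsets p Finset.univ
            (fun A => ∑ f ∈ greedy w bconf (subL E1 A), w f) := by
      rw [← huniv, expSubsets_insert p hni]
      have t2 : expSubsets p t
            (fun B => ∑ f ∈ greedy w bconf (subL E (insert e.1 B)), w f) =
          expSubsets p t
            (fun B => w e + ∑ f ∈ greedy w bconf (subL E2 B), w f) := by
        apply expSubsets_congr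
        intro B _
        rw [hgA (insert e.1 B) (Finset.mem_insert_self _ _), hinv2 B]
      have t5 : expSubsets p t
            (fun B => ∑ f ∈ greedy w bconf (subL E B), w f) =
          expSubsets p t
            (fun B => ∑ f ∈ greedy w bconf (subL E1 B), w f) := by
        apply expSubsets_congr
        intro B hB
        have : e.1 ∉ B := fun hh =>
          hni (Finset.mem_powerset.mp hB hh)
        rw [hAeq B this]
      have t4 : expSubsets p t (fun A => ∑ f ∈ greedy w bconf (subL E2 A), w f) =
          expSubsets p Finset.univ (fun A => ∑ f ∈ greedy w bconf (subL E2 A), w f) := by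
        rw [← huniv]
        exact (expSubsets_of_invariant p hni _ (fun B => by rw [hinv2 B])).symm
      have t6 : expSubsets p t (fun A => ∑ f ∈ greedy w bconf (subL E1 A), w f) =
          expSubsets p Finset.univ (fun A => ∑ f ∈ greedy w bconf (subL E1 A), w f) := by
        rw [← huniv]
        exact (expSubsets_of_invariant p hni _ (fun B => by rw [hinv1 B])).symm
      rw [t2, t5, expSubsets_add_const, t4, t6, huniv]
    rw [hmain]
    have h1p : (0 : ℝ) < 1 + p := by linarith
    rw [div_mul_eq_mul_div, div_le_iff₀ h1p]
    rw [div_mul_eq_mul_div, div_le_iff₀ h1p] at IH1 IH2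
    have hwe : 0 ≤ w e := hw0 e heE
    nlinarith [mul_le_mul_of_nonneg_left hO1 hp0,
      mul_le_mul_of_nonneg_left hO2 (mul_nonneg hp0 hp0),
      mul_le_mul_of_nonneg_left IH2 hp0,
      mul_le_mul_of_nonneg_left IH1 (by linarith : (0 : ℝ) ≤ 1 - p)]

/-- If `L' ⊆ L` contains each left vertex independently with
probability `p`, then the expected weight of the greedy matching on `G[L' ∪ R]` is at
least `p/(1+p)` times the weight of a maximum-weight matching of `G`. -/
theorem stmt3 {L R : Type*} [Fintype L] [DecidableEq L] [DecidableEq R]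
    (E : Finset (L × R)) (w : L × R → ℝ)
    (hw0 : ∀ e ∈ E, 0 ≤ w e) (hwinj : Set.InjOn w ↑E)
    (p : ℝ) (hp : p ∈ Set.Icc (0 : ℝ) 1) :
    expSubsets p Finset.univ (fun A => ∑ e ∈ greedy w bconf (subL E A), w e)
      ≥ (p / (1 + p)) * optWeight w bconf E := by
  obtain ⟨hp0, hp1⟩ := hp
  exact key p hp0 hp1 w E.card E le_rfl hw0 hwinj
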